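/- Let M, M̂ ∈ ℝ^{d1×d2} satisfy β ≤ M_ij ≤ α and β ≤ M̂_ij ≤ α for all (i,j), where 0 < β ≤ α, and set T = (α−β)²/(8β). Then d_H²(M, M̂) ≥ ((1 − e^{−T})/(4αT)) · ‖M − M̂‖_F² / (d1 d2). -/

import Mathlib

open Real

/-- Squared Frobenius norm. -/
def frobSq {d1 d2 : ℕ} (M : Matrix (Fin d1) (Fin d2) ℝ) : ℝ := ∑ i, ∑ j, (M i j) ^ 2

/-- The average squared Hellinger distance between the entrywise Poisson distributions of two
matrices with positive entries:
`d_H²(P,Q) = (1/(d1 d2)) ∑_{i,j} (2 − 2 exp(−(1/2)(√P_ij − √Q_ij)²))`. -/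
noncomputable def hellingerSq {d1 d2 : ℕ} (P Q : Matrix (Fin d1) (Fin d2) ℝ) : ℝ :=
  1 / ((d1 : ℝ) * d2) *
    ∑ i, ∑ j, (2 - 2 * Real.exp (-(1 / 2) * (Real.sqrt (P i j) - Real.sqrt (Q i j)) ^ 2))

/-- Convexity of `exp` gives the chord bound `exp (-x) ≤ 1 - (x/T) * (1 - exp (-T))`
for `0 ≤ x ≤ T`. -/
lemma exp_chord (T x : ℝ) (hT : 0 < T) (hx0 : 0 ≤ x) (hxT : x ≤ T) :
    Real.exp (-x) ≤ 1 - (x / T) * (1 - Real.exp (-T)) := by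
  have ha : 0 ≤ x / T := div_nonneg hx0 hT.le
  have hb : 0 ≤ 1 - x / T := by
    have : x / T ≤ 1 := (div_le_one hT).2 hxT
    linarith
  have hab : (x / T) + (1 - x / T) = 1 := by ring
  have := convexOn_exp.2 (Set.mem_univ (-T)) (Set.mem_univ 0) ha hb hab
  have harg : (x / T) • (-T) + (1 - x / T) • (0 : ℝ) = -x := by
    simp only [smul_eq_mul, mul_zero, add_zero]
    field_simp
  rw [harg] at this
  simp only [smul_eq_mul, Real.exp_zero] at this
  linarith

/-- Per-entry bound. -/
lemma entry_bound (α β p q : ℝ) (hβ : 0 < β) (hβα : β < α)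
    (hp : β ≤ p) (hpα : p ≤ α) (hq : β ≤ q) (hqα : q ≤ α) :
    (1 - Real.exp (-((α - β) ^ 2 / (8 * β)))) / (4 * α * ((α - β) ^ 2 / (8 * β)))
        * (p - q) ^ 2 ≤
      2 - 2 * Real.exp (-(1 / 2) * (Real.sqrt p - Real.sqrt q) ^ 2) := by
  set T : ℝ := (α - β) ^ 2 / (8 * β) with hTdef
  have hα : 0 < α := hβ.trans hβα
  have hT : 0 < T := by
    apply div_pos (pow_pos (by linarith) 2) (by linarith)
  set sp := Real.sqrt p
  set sq := Real.sqrt q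
  set sa := Real.sqrt α
  set sb := Real.sqrt β
  have hsp2 : sp ^ 2 = p := Real.sq_sqrt (by linarith)
  have hsq2 : sq ^ 2 = q := Real.sq_sqrt (by linarith)
  have hsa2 : sa ^ 2 = α := Real.sq_sqrt hα.le
  have hsb2 : sb ^ 2 = β := Real.sq_sqrt hβ.le
  have hsb0 : 0 ≤ sb := Real.sqrt_nonneg _
  have hsbp : sb ≤ sp := Real.sqrt_le_sqrt hp
  have hsbq : sb ≤ sq := Real.sqrt_le_sqrt hq
  have hspa : sp ≤ sa := Real.sqrt_le_sqrt hpα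
  have hsqa : sq ≤ sa := Real.sqrt_le_sqrt hqα
  set x : ℝ := (1 / 2) * (sp - sq) ^ 2 with hxdef
  have hx0 : 0 ≤ x := by positivity
  -- x ≤ T
  have h1 : (sp - sq) ^ 2 ≤ (sa - sb) ^ 2 := by
    apply sq_le_sq' <;> linarith
  have h2 : 4 * sb ^ 2 ≤ (sa + sb) ^ 2 := by nlinarith
  have hxT : x ≤ T := by
    rw [hxdef, hTdef, le_div_iff₀ (by linarith : (0:ℝ) < 8 * β)]
    nlinarith [mul_le_mul h1 h2 (by positivity) (by positivity)]
  -- (p-q)^2 ≤ 8 α x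
  have h3 : (sp + sq) ^ 2 ≤ 4 * sa ^ 2 := by nlinarith
  have hpq : (p - q) ^ 2 ≤ 8 * α * x := by
    have e : (p - q) ^ 2 = (sp - sq) ^ 2 * (sp + sq) ^ 2 := by rw [← hsp2, ← hsq2]; ring
    have hb : (sp - sq) ^ 2 * (sp + sq) ^ 2 ≤ (sp - sq) ^ 2 * (4 * sa ^ 2) :=
      mul_le_mul_of_nonneg_left h3 (sq_nonneg _)
    have e2 : 8 * α * x = (sp - sq) ^ 2 * (4 * sa ^ 2) := by
      rw [hxdef, ← hsa2]; ring
    rw [e, e2]; exact hb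
  -- chord bound
  have hchord := exp_chord T x hT hx0 hxT
  have hE1 : Real.exp (-T) ≤ 1 := Real.exp_le_one_iff.2 (by linarith)
  have hE0 : 0 ≤ 1 - Real.exp (-T) := by linarith
  have hmain : (1 - Real.exp (-T)) * (p - q) ^ 2 ≤ (1 - Real.exp (-T)) * (8 * α * x) :=
    mul_le_mul_of_nonneg_left hpq hE0
  have hgoal2 : -(1 / 2) * (sp - sq) ^ 2 = -x := by rw [hxdef]; ring
  rw [hgoal2]
  calc (1 - Real.exp (-T)) / (4 * α * T) * (p - q) ^ 2
      = (1 - Real.exp (-T)) * (p - q) ^ 2 / (4 * α * T) := by ring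
    _ ≤ (1 - Real.exp (-T)) * (8 * α * x) / (4 * α * T) := (div_le_div_iff_of_pos_right (by positivity)).2 hmain
    _ = 2 * (x / T) * (1 - Real.exp (-T)) := by field_simp; ring
    _ ≤ 2 - 2 * Real.exp (-x) := by linarith [hchord]

/-- Lemma 3: for matrices with entries in `[β, α]`, with `T = (α−β)²/(8β)`,
`d_H²(M, M̂) ≥ ((1 − e^{−T})/(4αT)) ‖M − M̂‖_F²/(d1 d2)`. -/
theorem hellinger_lower_bound_frobenius (d1 d2 : ℕ) (α β : ℝ) (hβ : 0 < β) (hβα : β ≤ α)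
    (M Mhat : Matrix (Fin d1) (Fin d2) ℝ)
    (hM : ∀ i j, β ≤ M i j ∧ M i j ≤ α) (hMhat : ∀ i j, β ≤ Mhat i j ∧ Mhat i j ≤ α) :
    (1 - Real.exp (-((α - β) ^ 2 / (8 * β)))) / (4 * α * ((α - β) ^ 2 / (8 * β)))
        * (frobSq (M - Mhat) / ((d1 : ℝ) * d2)) ≤
      hellingerSq M Mhat := by
  have hH0 : 0 ≤ hellingerSq M Mhat := by
    apply mul_nonneg (by positivity)
    apply Finset.sum_nonneg; intro i _
    apply Finset.sum_nonneg; intro j _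
    have : Real.exp (-(1 / 2) * (Real.sqrt (M i j) - Real.sqrt (Mhat i j)) ^ 2) ≤ 1 :=
      Real.exp_le_one_iff.2 (by nlinarith [sq_nonneg (Real.sqrt (M i j) - Real.sqrt (Mhat i j))])
    linarith
  rcases eq_or_lt_of_le hβα with heq | hlt
  · -- α = β: all entries equal, frobSq = 0
    have hz : frobSq (M - Mhat) = 0 := by
      unfold frobSq
      apply Finset.sum_eq_zero; intro i _
      apply Finset.sum_eq_zero; intro j _
      have h1 := hM i j; have h2 := hMhat i j
      have : M i j = Mhat i j := by rw [← heq] at h1 h2; linarith [h1.1, h1.2, h2.1, h2.2]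
      simp [Matrix.sub_apply, this]
    rw [hz]
    simpa using hH0
  · set c : ℝ := (1 - Real.exp (-((α - β) ^ 2 / (8 * β)))) / (4 * α * ((α - β) ^ 2 / (8 * β)))
      with hc
    have hsum : c * frobSq (M - Mhat) ≤
        ∑ i, ∑ j, (2 - 2 * Real.exp (-(1 / 2) *
          (Real.sqrt (M i j) - Real.sqrt (Mhat i j)) ^ 2)) := by
      unfold frobSq
      rw [Finset.mul_sum]
      apply Finset.sum_le_sum; intro i _
      rw [Finset.mul_sum]
      apply Finset.sum_le_sum; intro j _
      have h1 := hM i j; have h2 := hMhat i j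
      have := entry_bound α β (M i j) (Mhat i j) hβ hlt h1.1 h1.2 h2.1 h2.2
      simpa [Matrix.sub_apply] using this
    unfold hellingerSq
    calc c * (frobSq (M - Mhat) / ((d1 : ℝ) * d2))
        = 1 / ((d1 : ℝ) * d2) * (c * frobSq (M - Mhat)) := by ring
      _ ≤ 1 / ((d1 : ℝ) * d2) * ∑ i, ∑ j, (2 - 2 * Real.exp (-(1 / 2) *
            (Real.sqrt (M i j) - Real.sqrt (Mhat i j)) ^ 2)) := by
          apply mul_le_mul_of_nonneg_left hsum (by positivity)
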